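/- Let (ρ, p, v) be a primitive state (ρ > 0, p > 0, |v| < 1) with adiabatic index Γ ∈ (1,2], and let U = (D, m, E) be its conservative state. Then D > 0 and E > √(D² + |m|²); that is, U belongs to the admissible set G₁. -/

import Mathlib

/-- A primitive state (ρ, p, v) with ρ > 0, p > 0, ‖v‖ < 1 and
adiabatic index Γ ∈ (1,2] has conservative state U = (D, m, E) satisfying
D > 0 and E > √(D² + ‖m‖²), i.e. U ∈ G₁. -/
theorem primitive_state_in_admissible_set
    (d : ℕ) (hd : 0 < d) (Γ ρ p : ℝ)
    (hΓ1 : 1 < Γ) (hΓ2 : Γ ≤ 2) (hρ : 0 < ρ) (hp : 0 < p)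
    (v : EuclideanSpace ℝ (Fin d)) (hv : ‖v‖ < 1)
    (e h W D E : ℝ) (m : EuclideanSpace ℝ (Fin d))
    (he : e = p / ((Γ - 1) * ρ))
    (hh : h = 1 + e + p / ρ)
    (hW : W = 1 / Real.sqrt (1 - ‖v‖ ^ 2))
    (hD : D = ρ * W)
    (hm : m = (ρ * h * W ^ 2) • v)
    (hE : E = ρ * h * W ^ 2 - p) :
    0 < D ∧ Real.sqrt (D ^ 2 + ‖m‖ ^ 2) < E := by
  set s := ‖v‖ with hs
  have hs0 : 0 ≤ s := norm_nonneg v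
  have hs2 : 0 < 1 - s ^ 2 := by nlinarith
  have ht : (0:ℝ) < Real.sqrt (1 - s ^ 2) := Real.sqrt_pos.mpr hs2
  have ht2 : (Real.sqrt (1 - s ^ 2)) ^ 2 = 1 - s ^ 2 := Real.sq_sqrt hs2.le
  have hW0 : 0 < W := by rw [hW]; positivity
  have hW2 : W ^ 2 * (1 - s ^ 2) = 1 := by
    rw [hW]; field_simp; exact ht2.symm
  have hW1 : 1 ≤ W ^ 2 := by
    have h0 : 0 ≤ W ^ 2 * s ^ 2 := by positivity
    nlinarith [hW2]
  have hΓ1' : 0 < Γ - 1 := by linarith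
  have he0 : 0 < e := by rw [he]; positivity
  have hh1 : 1 < h := by
    rw [hh]; have : 0 < p / ρ := by positivity
    linarith
  have hh0 : 0 < h := by linarith
  have hD0 : 0 < D := by rw [hD]; positivity
  have hA0 : 0 < ρ * h * W ^ 2 := by positivity
  have hmn : ‖m‖ = ρ * h * W ^ 2 * s := by
    rw [hm, norm_smul, Real.norm_eq_abs, abs_of_pos hA0]
  have hρh : ρ * h = ρ + p / (Γ - 1) + p := by
    rw [hh, he]; field_simp
  have hpdiv : p ≤ p / (Γ - 1) := by
    rw [le_div_iff₀ hΓ1']; nlinarith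
  have hρh2p : ρ ≤ ρ * h - 2 * p := by rw [hρh]; linarith
  have hE0 : 0 < E := by
    have h1 : ρ * h ≤ ρ * h * W ^ 2 :=
      (le_mul_iff_one_le_right (mul_pos hρ hh0)).mpr hW1
    rw [hE]; linarith
  refine ⟨hD0, ?_⟩
  rw [show Real.sqrt (D ^ 2 + ‖m‖ ^ 2) < E ↔ D ^ 2 + ‖m‖ ^ 2 < E ^ 2 from
    Real.sqrt_lt' hE0]
  have hA2 : (ρ * h * W ^ 2) ^ 2 * s ^ 2
      = (ρ * h * W ^ 2) ^ 2 - ρ ^ 2 * h ^ 2 * W ^ 2 := by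
    linear_combination (-(ρ * h) ^ 2 * W ^ 2) * hW2
  have key : 0 < ρ ^ 2 * h ^ 2 - 2 * ρ * h * p - ρ ^ 2 := by
    have h1 : ρ * h * ρ ≤ ρ * h * (ρ * h - 2 * p) :=
      mul_le_mul_of_nonneg_left hρh2p (mul_pos hρ hh0).le
    have h2 : 0 < ρ * ρ * (h - 1) := mul_pos (mul_pos hρ hρ) (by linarith)
    linarith [h1, h2]
  have key2 : 0 < W ^ 2 * (ρ ^ 2 * h ^ 2 - 2 * ρ * h * p - ρ ^ 2) :=
    mul_pos (by positivity) key
  rw [hD, hE, hmn]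
  have step : (ρ * h * W ^ 2 * s) ^ 2 = (ρ * h * W ^ 2) ^ 2 * s ^ 2 := by ring
  rw [step, hA2]
  have final : (ρ * h * W ^ 2 - p) ^ 2
      - (ρ ^ 2 * W ^ 2 + ((ρ * h * W ^ 2) ^ 2 - ρ ^ 2 * h ^ 2 * W ^ 2))
      = W ^ 2 * (ρ ^ 2 * h ^ 2 - 2 * ρ * h * p - ρ ^ 2) + p ^ 2 := by ring
  linarith [key2, sq_nonneg p, final]
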